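/- Let n ≥ 1, T > 0, let A : [0, T) → ℝ^{n×n} be continuous with A(t) antisymmetric for every t, and let Q : [0, T) → ℝ^{n×n} be differentiable with Q′(t) = A(t)·Q(t) for all t ∈ (0, T) and Q(0) = I. Then Q(t)·Q(t)ᵀ = I and Q(t)ᵀ·Q(t) = I for all t ∈ [0, T); in particular Q(t) is orthogonal for every t. -/

import Mathlib

open Matrix Set Filter Topology

attribute [local instance] Matrix.linftyOpNormedRing Matrix.linftyOpNormedSpace

set_option maxHeartbeats 1000000

noncomputable def matCLE (n : ℕ) : Matrix (Fin n) (Fin n) ℝ ≃L[ℝ] (Fin n → Fin n → ℝ) :=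
  LinearEquiv.toContinuousLinearEquiv
  { toFun := fun M i j => M i j
    invFun := fun f => Matrix.of f
    map_add' := fun _ _ => rfl
    map_smul' := fun _ _ => rfl
    left_inv := fun _ => rfl
    right_inv := fun _ => rfl }

lemma matrix_hasDerivWithinAt {n : ℕ} {F : ℝ → Matrix (Fin n) (Fin n) ℝ}
    {F' : Matrix (Fin n) (Fin n) ℝ} {s : Set ℝ} {t : ℝ}
    (h : ∀ i j, HasDerivWithinAt (fun τ => F τ i j) (F' i j) s t) :
    HasDerivWithinAt F F' s t := by
  have hp : HasDerivWithinAt (fun τ => (fun i j => F τ i j : Fin n → Fin n → ℝ))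
      (fun i j => F' i j) s t :=
    hasDerivWithinAt_pi.2 fun i => hasDerivWithinAt_pi.2 fun j => h i j
  have h2 := ((matCLE n).symm : (Fin n → Fin n → ℝ) →L[ℝ] Matrix (Fin n) (Fin n) ℝ
    ).hasFDerivAt.comp_hasDerivWithinAt t hp
  convert h2 using 2 <;> rfl

lemma matrix_continuousOn {n : ℕ} {F : ℝ → Matrix (Fin n) (Fin n) ℝ} {s : Set ℝ}
    (h : ∀ i j, ContinuousOn (fun t => F t i j) s) : ContinuousOn F s := by
  have hp : ContinuousOn (fun τ => (fun i j => F τ i j : Fin n → Fin n → ℝ)) s :=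
    continuousOn_pi.2 fun i => continuousOn_pi.2 fun j => h i j
  have h2 := ((matCLE n).symm.continuous.comp_continuousOn hp)
  convert h2 using 2 <;> rfl

/-- If `Q′(t) = A(t)·Q(t)` on `(0, T)` with `Q(0) = I` and `A(t)` antisymmetric and
continuous, then `Q(t)` is orthogonal for all `t ∈ [0, T)`. Derivatives of
matrix-valued functions are taken entrywise. -/
theorem orthogonality_propagates (n : ℕ) (hn : 1 ≤ n) (T : ℝ) (hT : 0 < T)
    (A : ℝ → Matrix (Fin n) (Fin n) ℝ)
    (hA_cont : ∀ i j, ContinuousOn (fun t => A t i j) (Set.Ico 0 T))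
    (hA_anti : ∀ t ∈ Set.Ico (0 : ℝ) T, (A t)ᵀ = -A t)
    (Q Q' : ℝ → Matrix (Fin n) (Fin n) ℝ)
    (hQ_deriv : ∀ t ∈ Set.Ico (0 : ℝ) T, ∀ i j,
      HasDerivWithinAt (fun s => Q s i j) (Q' t i j) (Set.Ico 0 T) t)
    (hQ_ode : ∀ t ∈ Set.Ioo (0 : ℝ) T, Q' t = A t * Q t)
    (hQ0 : Q 0 = 1) :
    ∀ t ∈ Set.Ico (0 : ℝ) T, Q t * (Q t)ᵀ = 1 ∧ (Q t)ᵀ * Q t = 1 := by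
  intro t ht
  suffices hmain : Q t * (Q t)ᵀ = 1 from ⟨hmain, mul_eq_one_comm.mp hmain⟩
  rcases eq_or_lt_of_le ht.1 with h0 | h0
  · rw [← h0, hQ0]; simp
  set f : ℝ → Matrix (Fin n) (Fin n) ℝ := fun τ => Q τ * (Q τ)ᵀ with hf_def
  set D : ℝ → Matrix (Fin n) (Fin n) ℝ :=
    fun τ => Q' τ * (Q τ)ᵀ + Q τ * (Q' τ)ᵀ with hD_def
  show f t = 1
  -- matrix-level derivative of f on Ico 0 T
  have hfD : ∀ τ ∈ Ico (0:ℝ) T, HasDerivWithinAt f (D τ) (Ico 0 T) τ := by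
    intro τ hτ
    apply matrix_hasDerivWithinAt
    intro i j
    have h1 : (fun s => f s i j) = fun s => ∑ k, Q s i k * Q s j k := by
      funext s; simp [hf_def, Matrix.mul_apply]
    have h2 : D τ i j = ∑ k, (Q' τ i k * Q τ j k + Q τ i k * Q' τ j k) := by
      simp [hD_def, Matrix.mul_apply, Finset.sum_add_distrib]
    rw [h1, h2]
    exact HasDerivWithinAt.fun_sum fun k _ => (hQ_deriv τ hτ i k).mul (hQ_deriv τ hτ j k)
  have hDode : ∀ τ ∈ Ioo (0:ℝ) T, D τ = A τ * f τ - f τ * A τ := by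
    intro τ hτ
    have h2 := hA_anti τ ⟨le_of_lt hτ.1, hτ.2⟩
    simp only [hD_def, hf_def, hQ_ode τ hτ, Matrix.transpose_mul, h2]
    noncomm_ring
  have hderivAt : ∀ τ ∈ Ioo (0:ℝ) T, HasDerivAt f (D τ) τ := fun τ hτ =>
    (hfD τ ⟨le_of_lt hτ.1, hτ.2⟩).hasDerivAt
      (mem_of_superset (isOpen_Ioo.mem_nhds hτ) Ioo_subset_Ico_self)
  have hfcont : ContinuousOn f (Ico 0 T) := fun τ hτ => (hfD τ hτ).continuousWithinAt
  have hf0 : f 0 = 1 := by simp [hf_def, hQ0]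
  -- continuity and boundedness of A
  have hAcont : ContinuousOn A (Ico 0 T) := matrix_continuousOn hA_cont
  have hsub : Icc (0:ℝ) t ⊆ Ico 0 T := Icc_subset_Ico_right ht.2
  obtain ⟨C0, hC0⟩ := isCompact_Icc.exists_bound_of_continuousOn (hAcont.mono hsub)
  set C : ℝ := max C0 0 with hC_def
  have hC : ∀ s ∈ Icc (0:ℝ) t, ‖A s‖ ≤ C := fun s hs => (hC0 s hs).trans (le_max_left _ _)
  have hCpos : (0:ℝ) ≤ 2 * C := by positivity
  set K : NNReal := Real.toNNReal (2 * C) with hK_def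
  have hKcoe : (K : ℝ) = 2 * C := Real.coe_toNNReal _ hCpos
  -- the vector field
  set proj : ℝ → ℝ := fun τ => min (max τ 0) t with hproj_def
  have hprojmem : ∀ τ, proj τ ∈ Icc (0:ℝ) t := fun τ =>
    ⟨le_min (le_max_right _ _) (le_of_lt h0), min_le_right _ _⟩
  have hprojeq : ∀ τ ∈ Icc (0:ℝ) t, proj τ = τ := fun τ hτ => by
    simp [hproj_def, max_eq_left hτ.1, min_eq_left hτ.2]
  set v : ℝ → Matrix (Fin n) (Fin n) ℝ → Matrix (Fin n) (Fin n) ℝ :=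
    fun τ M => A (proj τ) * M - M * A (proj τ) with hv_def
  have hlip : ∀ τ, LipschitzWith K (v τ) := by
    intro τ
    apply LipschitzWith.of_dist_le_mul
    intro M N
    rw [dist_eq_norm, dist_eq_norm, hKcoe]
    have he : v τ M - v τ N = A (proj τ) * (M - N) - (M - N) * A (proj τ) := by
      simp only [hv_def]; noncomm_ring
    rw [he]
    have hA' : ‖A (proj τ)‖ ≤ C := hC _ (hprojmem τ)
    calc ‖A (proj τ) * (M - N) - (M - N) * A (proj τ)‖
        ≤ ‖A (proj τ) * (M - N)‖ + ‖(M - N) * A (proj τ)‖ := norm_sub_le _ _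
      _ ≤ ‖A (proj τ)‖ * ‖M - N‖ + ‖M - N‖ * ‖A (proj τ)‖ :=
          add_le_add (norm_mul_le _ _) (norm_mul_le _ _)
      _ ≤ C * ‖M - N‖ + ‖M - N‖ * C := by
          gcongr <;> first | exact hA' | positivity
      _ = 2 * C * ‖M - N‖ := by ring
  -- derivative of f at 0 from the right
  have hIooT : Ioo (0:ℝ) T ∈ 𝓝[>] (0:ℝ) := Ioo_mem_nhdsGT hT
  have hnhds0 : 𝓝[Ioo (0:ℝ) T] (0:ℝ) = 𝓝[>] (0:ℝ) := nhdsWithin_Ioo_eq_nhdsGT hT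
  have hfdiff : DifferentiableOn ℝ f (Ioo 0 T) := fun τ hτ =>
    ((hderivAt τ hτ).differentiableAt).differentiableWithinAt
  have hflim : ContinuousWithinAt f (Ioo 0 T) 0 :=
    (hfcont 0 ⟨le_rfl, hT⟩).mono Ioo_subset_Ico_self
  have hftend : Tendsto f (𝓝[>] (0:ℝ)) (𝓝 1) := by
    have := hflim.tendsto; rw [hnhds0, hf0] at this; exact this
  have hAtend : Tendsto A (𝓝[>] (0:ℝ)) (𝓝 (A 0)) := by
    have := ((hAcont 0 ⟨le_rfl, hT⟩).mono Ioo_subset_Ico_self).tendsto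
    rwa [hnhds0] at this
  have hlim' : Tendsto (fun τ => deriv f τ) (𝓝[>] (0:ℝ)) (𝓝 0) := by
    have h1 : Tendsto (fun τ => A τ * f τ - f τ * A τ) (𝓝[>] (0:ℝ))
        (𝓝 (A 0 * 1 - 1 * A 0)) := (hAtend.mul hftend).sub (hftend.mul hAtend)
    rw [show A 0 * 1 - 1 * A 0 = (0 : Matrix (Fin n) (Fin n) ℝ) by simp] at h1
    refine h1.congr' ?_
    filter_upwards [hIooT] with τ hτ
    exact ((hderivAt τ hτ).deriv.trans (hDode τ hτ)).symm
  have hf'0 : HasDerivWithinAt f 0 (Ici 0) 0 :=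
    hasDerivWithinAt_Ici_of_tendsto_deriv hfdiff hflim hIooT hlim'
  -- ODE uniqueness on [0, t]
  have hf'Icc : ∀ τ ∈ Ico (0:ℝ) t, HasDerivWithinAt f (v τ (f τ)) (Ici τ) τ := by
    intro τ hτ
    have hpe : proj τ = τ := hprojeq τ ⟨hτ.1, le_of_lt hτ.2⟩
    rcases eq_or_lt_of_le hτ.1 with h | h
    · rw [← h]
      have : v 0 (f 0) = 0 := by
        have hp0 : proj 0 = 0 := hprojeq 0 ⟨le_rfl, le_of_lt h0⟩
        simp [hv_def, hp0, hf0]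
      rw [this]; exact hf'0
    · have hτ' : τ ∈ Ioo (0:ℝ) T := ⟨h, lt_trans hτ.2 ht.2⟩
      have : v τ (f τ) = D τ := by rw [hv_def]; simp only [hpe]; rw [← hDode τ hτ']
      rw [this]
      exact (hderivAt τ hτ').hasDerivWithinAt
  have hg'Icc : ∀ τ ∈ Ico (0:ℝ) t,
      HasDerivWithinAt (fun _ : ℝ => (1 : Matrix (Fin n) (Fin n) ℝ)) (v τ 1) (Ici τ) τ := by
    intro τ hτ
    have : v τ (1 : Matrix (Fin n) (Fin n) ℝ) = 0 := by simp [hv_def]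
    rw [this]
    exact hasDerivWithinAt_const _ _ _
  have key := ODE_solution_unique_of_mem_Icc_right
      (v := v) (s := fun _ => (univ : Set (Matrix (Fin n) (Fin n) ℝ))) (K := K)
      (f := f) (g := fun _ => (1 : Matrix (Fin n) (Fin n) ℝ)) (a := 0) (b := t)
      (fun τ _ => (hlip τ).lipschitzOnWith)
      (hfcont.mono hsub) hf'Icc (fun _ _ => mem_univ _)
      continuousOn_const hg'Icc (fun _ _ => mem_univ _) hf0
  exact key ⟨le_of_lt h0, le_rfl⟩
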